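/- The total number of subgroups of Z_{p^4} × Z_{p^2} equals 3p^2 + 5p + 7, for every prime p. -/

import Mathlib

open AddSubgroup QuotientAddGroup

section Goursat
variable {G H : Type*} [AddCommGroup G] [AddCommGroup H]

/-- The subgroup of `G × H` built from `A ≤ G`, `K ≤ H` and `φ : A →+ H ⧸ K`. -/
def mkSub (A : AddSubgroup G) (K : AddSubgroup H) (φ : A →+ H ⧸ K) : AddSubgroup (G × H) where
  carrier := {x | ∃ h : x.1 ∈ A, (x.2 : H ⧸ K) = φ ⟨x.1, h⟩}
  zero_mem' := ⟨A.zero_mem, by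
    show ((0 : H) : H ⧸ K) = φ 0
    rw [map_zero]; rfl⟩
  add_mem' := by
    rintro ⟨x1, x2⟩ ⟨y1, y2⟩ ⟨hx, hx2⟩ ⟨hy, hy2⟩
    exact ⟨A.add_mem hx hy, by
      show ((x2 + y2 : H) : H ⧸ K) = φ (⟨x1, hx⟩ + ⟨y1, hy⟩)
      rw [map_add, QuotientAddGroup.mk_add, hx2, hy2]⟩
  neg_mem' := by
    rintro ⟨x1, x2⟩ ⟨hx, hx2⟩
    exact ⟨A.neg_mem hx, by
      show ((-x2 : H) : H ⧸ K) = φ (-⟨x1, hx⟩)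
      rw [map_neg, QuotientAddGroup.mk_neg, hx2]⟩

lemma mem_mkSub {A : AddSubgroup G} {K : AddSubgroup H} {φ : A →+ H ⧸ K} {x : G × H} :
    x ∈ mkSub A K φ ↔ ∃ h : x.1 ∈ A, (x.2 : H ⧸ K) = φ ⟨x.1, h⟩ := Iff.rfl

lemma mkSub_map_fst (A : AddSubgroup G) (K : AddSubgroup H) (φ : A →+ H ⧸ K) :
    (mkSub A K φ).map (AddMonoidHom.fst G H) = A := by
  ext x
  simp only [AddSubgroup.mem_map]
  constructor
  · rintro ⟨⟨y1, y2⟩, ⟨h, -⟩, rfl⟩; exact h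
  · intro hx
    obtain ⟨y, hy⟩ := QuotientAddGroup.mk_surjective (φ ⟨x, hx⟩)
    exact ⟨(x, y), ⟨hx, hy⟩, rfl⟩

lemma mkSub_goursatSnd (A : AddSubgroup G) (K : AddSubgroup H) (φ : A →+ H ⧸ K) :
    (mkSub A K φ).goursatSnd = K := by
  ext y
  rw [AddSubgroup.mem_goursatSnd, mem_mkSub]
  constructor
  · rintro ⟨h, hy⟩
    rw [show φ ⟨(0 : G), h⟩ = 0 from by rw [show (⟨(0 : G), h⟩ : A) = 0 from rfl, map_zero]] at hy
    exact (QuotientAddGroup.eq_zero_iff y).1 hy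
  · intro hy
    refine ⟨A.zero_mem, ?_⟩
    rw [(QuotientAddGroup.eq_zero_iff y).2 hy, show (⟨(0 : G), A.zero_mem⟩ : A) = 0 from rfl,
      map_zero]

lemma mkSub_injective (A : AddSubgroup G) (K : AddSubgroup H) :
    Function.Injective (mkSub A K) := by
  intro φ φ' h
  ext a
  obtain ⟨y, hy⟩ := QuotientAddGroup.mk_surjective (φ a)
  have hmem : ((a : G), y) ∈ mkSub A K φ := ⟨a.2, by simpa using hy⟩
  rw [h] at hmem
  obtain ⟨h', hy'⟩ := hmem
  rw [← hy, hy']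

lemma mkSub_surjective (A : AddSubgroup G) (K : AddSubgroup H) (I : AddSubgroup (G × H))
    (h1 : I.map (AddMonoidHom.fst G H) = A) (h2 : I.goursatSnd = K) :
    ∃ φ : A →+ H ⧸ K, mkSub A K φ = I := by
  have hex : ∀ a : A, ∃ y : H, ((a : G), y) ∈ I := by
    rintro ⟨a, ha⟩
    rw [← h1] at ha
    obtain ⟨⟨x1, x2⟩, hx, hfst⟩ := ha
    exact ⟨x2, by simpa [← hfst] using hx⟩
  choose y hy using hex
  have hsub : ∀ {d : H}, (0, d) ∈ I → d ∈ K := fun hd => h2 ▸ AddSubgroup.mem_goursatSnd.2 hd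
  refine ⟨AddMonoidHom.mk' (fun a => (y a : H ⧸ K)) ?_, ?_⟩
  · intro a b
    rw [← QuotientAddGroup.mk_add, QuotientAddGroup.eq]
    refine hsub ?_
    have := I.sub_mem (I.add_mem (hy a) (hy b)) (hy (a + b))
    simpa [neg_add_eq_sub] using this
  · ext ⟨x1, x2⟩
    rw [mem_mkSub]
    constructor
    · rintro ⟨hx, hx2⟩
      simp only [AddMonoidHom.mk'_apply] at hx2
      rw [QuotientAddGroup.eq] at hx2
      have hd : (0, -x2 + y ⟨x1, hx⟩) ∈ I := by rw [← h2] at hx2; exact mem_goursatSnd.1 hx2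
      have := I.sub_mem (hy ⟨x1, hx⟩) hd
      simpa using this
    · intro hx
      have hx1 : x1 ∈ A := by
        rw [← h1]; exact ⟨(x1, x2), hx, rfl⟩
      refine ⟨hx1, ?_⟩
      simp only [AddMonoidHom.mk'_apply]
      rw [QuotientAddGroup.eq]
      refine hsub ?_
      have := I.sub_mem (hy ⟨x1, hx1⟩) hx
      simpa [neg_add_eq_sub] using this


noncomputable def fiberEquiv (A : AddSubgroup G) (K : AddSubgroup H) :
    (A →+ H ⧸ K) ≃
      {I : AddSubgroup (G × H) // (I.map (AddMonoidHom.fst G H), I.goursatSnd) = (A, K)} :=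
  Equiv.ofBijective (fun φ => ⟨mkSub A K φ, by rw [mkSub_map_fst, mkSub_goursatSnd]⟩)
    ⟨fun φ φ' h => mkSub_injective A K (congrArg Subtype.val h),
     by rintro ⟨I, hI⟩
        obtain ⟨h1, h2⟩ := Prod.mk.injEq _ _ _ _ ▸ hI
        obtain ⟨φ, hφ⟩ := mkSub_surjective A K I h1 h2
        exact ⟨φ, Subtype.ext hφ⟩⟩

lemma card_addSubgroup_prod [Finite G] [Finite H] :
    Nat.card (AddSubgroup (G × H)) =
      ∑ᶠ x : AddSubgroup G × AddSubgroup H, Nat.card (x.1 →+ H ⧸ x.2) := by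
  have hfin : Finite (AddSubgroup (G × H)) :=
    Finite.of_injective (fun I => (I : Set (G × H))) SetLike.coe_injective
  have hfinG : Finite (AddSubgroup G) :=
    Finite.of_injective (fun I => (I : Set G)) SetLike.coe_injective
  have hfinH : Finite (AddSubgroup H) :=
    Finite.of_injective (fun I => (I : Set H)) SetLike.coe_injective
  classical
  have := Fintype.ofFinite (AddSubgroup G × AddSubgroup H)
  rw [Nat.card_congr (Equiv.sigmaFiberEquiv
      (fun I : AddSubgroup (G × H) => (I.map (AddMonoidHom.fst G H), I.goursatSnd))).symm]
  have hfib : ∀ x : AddSubgroup G × AddSubgroup H, Fintype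
      {I : AddSubgroup (G × H) // (I.map (AddMonoidHom.fst G H), I.goursatSnd) = x} :=
    fun x => Fintype.ofFinite _
  rw [Nat.card_eq_fintype_card, Fintype.card_sigma, finsum_eq_sum_of_fintype]
  exact Finset.sum_congr rfl fun x _ => by
    rw [← Nat.card_eq_fintype_card, ← Nat.card_congr (fiberEquiv x.1 x.2)]

end Goursat

open AddSubgroup

section Cyclic

variable {B : Type*} [AddCommGroup B]

/-- Homs out of `ZMod n` correspond to `n`-torsion points. -/
noncomputable def zmodHomEquiv (n : ℕ) : (ZMod n →+ B) ≃ {x : B // n • x = 0} where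
  toFun f := ⟨f 1, by
    rw [← map_nsmul, show n • (1 : ZMod n) = 0 by simp [nsmul_eq_mul], map_zero]⟩
  invFun x := ZMod.lift n ⟨zmultiplesHom B x.1, by
    simpa [zmultiplesHom_apply, natCast_zsmul] using x.2⟩
  left_inv f := by
    ext z
    obtain ⟨k, rfl⟩ := ZMod.intCast_surjective z
    rw [ZMod.lift_coe, zmultiplesHom_apply,
      show ((k : ZMod n)) = k • ((1 : ℤ) : ZMod n) by simp [zsmul_eq_mul], map_zsmul]
    simp
  right_inv x := by
    ext
    simp only
    rw [show (1 : ZMod n) = ((1 : ℤ) : ZMod n) by simp, ZMod.lift_coe, zmultiplesHom_apply,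
      one_zsmul]

/-- The `d`-torsion subgroup. -/
def torsionSub (n d : ℕ) : AddSubgroup (ZMod n) :=
  (AddMonoidHom.mk' (fun x : ZMod n => d • x) (fun x y => smul_add d x y)).ker

lemma mem_torsionSub {n d : ℕ} {x : ZMod n} : x ∈ torsionSub n d ↔ d • x = 0 := Iff.rfl

lemma card_torsionSub (n d : ℕ) [NeZero n] : Nat.card (torsionSub n d) = Nat.gcd d n := by
  set ψ : ZMod n →+ ZMod n := AddMonoidHom.mk' (fun x : ZMod n => d • x) (fun x y => smul_add d x y)
  have hrange : ψ.range = zmultiples ((d : ℕ) : ZMod n) := by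
    ext x
    simp only [AddMonoidHom.mem_range, mem_zmultiples_iff, zsmul_eq_mul]
    constructor
    · rintro ⟨y, rfl⟩
      refine ⟨(y.val : ℤ), ?_⟩
      show _ = d • y
      rw [nsmul_eq_mul]
      push_cast
      rw [ZMod.natCast_val, ZMod.cast_id, mul_comm]
    · rintro ⟨k, rfl⟩
      refine ⟨(k : ZMod n), ?_⟩
      show d • ((k : ℤ) : ZMod n) = ((k : ℤ) : ZMod n) * ((d : ℕ) : ZMod n)
      rw [nsmul_eq_mul, mul_comm]
  have hcardrange : Nat.card ψ.range = n / Nat.gcd n d := by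
    rw [hrange, Nat.card_zmultiples, ZMod.addOrderOf_coe d (NeZero.ne n)]
  have h1 : Nat.card (ZMod n) = Nat.card (ZMod n ⧸ ψ.ker) * Nat.card ψ.ker :=
    AddSubgroup.card_eq_card_quotient_mul_card_addSubgroup _
  have h2 : Nat.card (ZMod n ⧸ ψ.ker) = n / Nat.gcd n d := by
    rw [Nat.card_congr (QuotientAddGroup.quotientKerEquivRange ψ).toEquiv, hcardrange]
  rw [Nat.card_zmod, h2] at h1
  have hg : Nat.gcd n d ∣ n := Nat.gcd_dvd_left n d
  have hgpos : 0 < Nat.gcd n d := Nat.gcd_pos_of_pos_left d (Nat.pos_of_ne_zero (NeZero.ne n))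
  have hq : 0 < n / Nat.gcd n d := Nat.div_pos (Nat.le_of_dvd (Nat.pos_of_ne_zero (NeZero.ne n)) hg) hgpos
  have : Nat.card (torsionSub n d) = n / (n / Nat.gcd n d) := by
    rw [show torsionSub n d = ψ.ker from rfl]
    exact (Nat.div_eq_of_eq_mul_left hq (h1.trans (mul_comm _ _))).symm
  rw [this, Nat.div_div_self hg (NeZero.ne n), Nat.gcd_comm]

lemma card_torsion_subtype (n d : ℕ) [NeZero n] :
    Nat.card {x : ZMod n // d • x = 0} = Nat.gcd d n := by
  rw [← card_torsionSub n d]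
  rfl

theorem card_addMonoidHom_cyclic {A : Type*} [AddCommGroup A] [Finite A] [Finite B]
    [IsAddCyclic A] [IsAddCyclic B] :
    Nat.card (A →+ B) = Nat.gcd (Nat.card A) (Nat.card B) := by
  have hA : NeZero (Nat.card A) := ⟨Nat.card_pos.ne'⟩
  have hB : NeZero (Nat.card B) := ⟨Nat.card_pos.ne'⟩
  have eA : A ≃+ ZMod (Nat.card A) := (zmodAddCyclicAddEquiv inferInstance).symm
  have eB : B ≃+ ZMod (Nat.card B) := (zmodAddCyclicAddEquiv inferInstance).symm
  have e1 : (A →+ B) ≃ (ZMod (Nat.card A) →+ B) :=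
    { toFun := fun f => f.comp eA.symm.toAddMonoidHom
      invFun := fun f => f.comp eA.toAddMonoidHom
      left_inv := fun f => by ext x; simp
      right_inv := fun f => by ext x; simp }
  have e2 : {x : B // (Nat.card A) • x = 0} ≃ {y : ZMod (Nat.card B) // (Nat.card A) • y = 0} :=
    { toFun := fun x => ⟨eB x.1, by rw [← map_nsmul, x.2, map_zero]⟩
      invFun := fun y => ⟨eB.symm y.1, by rw [← map_nsmul, y.2, map_zero]⟩
      left_inv := fun x => by simp
      right_inv := fun y => by simp }
  rw [Nat.card_congr e1, Nat.card_congr (zmodHomEquiv (Nat.card A)), Nat.card_congr e2,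
    card_torsion_subtype]

end Cyclic

section Classify

lemma addSubgroup_eq_torsion {n : ℕ} [NeZero n] (A : AddSubgroup (ZMod n)) :
    A = torsionSub n (Nat.card A) := by
  have hle : A ≤ torsionSub n (Nat.card A) := by
    intro x hx
    rw [mem_torsionSub]
    have h0 : (Nat.card A) • (⟨x, hx⟩ : A) = 0 := card_nsmul_eq_zero'
    have h2 := congrArg (AddSubgroup.subtype A) h0
    rwa [map_nsmul, map_zero] at h2
  have hdvd : Nat.card A ∣ n := by
    simpa [Nat.card_zmod] using AddSubgroup.card_addSubgroup_dvd_card A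
  have hcard : Nat.card (torsionSub n (Nat.card A)) = Nat.card A := by
    rw [card_torsionSub, Nat.gcd_eq_left hdvd]
  exact AddSubgroup.eq_of_le_of_card_ge hle hcard.le

lemma card_torsion_pow (p : ℕ) (hp : p.Prime) (k i : ℕ) (hik : i ≤ k) [NeZero (p ^ k)] :
    Nat.card (torsionSub (p ^ k) (p ^ i)) = p ^ i := by
  rw [card_torsionSub, Nat.gcd_eq_left (pow_dvd_pow p hik)]

noncomputable def subgroupEquivFin (p : ℕ) (hp : p.Prime) (k : ℕ) [NeZero (p ^ k)] :
    Fin (k + 1) ≃ AddSubgroup (ZMod (p ^ k)) := by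
  refine Equiv.ofBijective (fun i => torsionSub (p ^ k) (p ^ (i : ℕ))) ⟨?_, ?_⟩
  · intro i j hij
    have h1 := card_torsion_pow p hp k i (Nat.lt_succ_iff.1 i.2)
    have h2 := card_torsion_pow p hp k j (Nat.lt_succ_iff.1 j.2)
    have hij' : torsionSub (p ^ k) (p ^ (i : ℕ)) = torsionSub (p ^ k) (p ^ (j : ℕ)) := hij
    rw [hij', h2] at h1
    exact Fin.ext (Nat.pow_right_injective hp.two_le h1.symm)
  · intro A
    have hdvd : Nat.card A ∣ p ^ k := by
      simpa [Nat.card_zmod] using AddSubgroup.card_addSubgroup_dvd_card A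
    obtain ⟨i, hik, hi⟩ := (Nat.dvd_prime_pow hp).1 hdvd
    refine ⟨⟨i, Nat.lt_succ_of_le hik⟩, ?_⟩
    show torsionSub (p ^ k) (p ^ i) = A
    rw [← hi, ← addSubgroup_eq_torsion]

lemma card_subgroupEquivFin (p : ℕ) (hp : p.Prime) (k : ℕ) [NeZero (p ^ k)] (i : Fin (k + 1)) :
    Nat.card (subgroupEquivFin p hp k i) = p ^ (i : ℕ) := by
  show Nat.card (torsionSub (p ^ k) (p ^ (i : ℕ))) = _
  exact card_torsion_pow p hp k i (Nat.lt_succ_iff.1 i.2)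

end Classify

lemma gcd_pow_min (p a b : ℕ) : Nat.gcd (p ^ a) (p ^ b) = p ^ (min a b) := by
  rcases le_total a b with h | h
  · rw [min_eq_left h]; exact Nat.gcd_eq_left (pow_dvd_pow p h)
  · rw [min_eq_right h]; exact Nat.gcd_eq_right (pow_dvd_pow p h)

theorem stmt_4 (p : ℕ) (hp : p.Prime) :
    Nat.card (AddSubgroup (ZMod (p ^ 4) × ZMod (p ^ 2))) =
      3 * p ^ 2 + 5 * p + 7 := by
  haveI h4 : NeZero (p ^ 4) := ⟨pow_ne_zero _ hp.pos.ne'⟩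
  haveI h2 : NeZero (p ^ 2) := ⟨pow_ne_zero _ hp.pos.ne'⟩
  classical
  haveI : Finite (AddSubgroup (ZMod (p ^ 4))) :=
    Finite.of_injective (fun I => (I : Set (ZMod (p ^ 4)))) SetLike.coe_injective
  haveI : Finite (AddSubgroup (ZMod (p ^ 2))) :=
    Finite.of_injective (fun I => (I : Set (ZMod (p ^ 2)))) SetLike.coe_injective
  haveI : Fintype (AddSubgroup (ZMod (p ^ 4))) := Fintype.ofFinite _
  haveI : Fintype (AddSubgroup (ZMod (p ^ 2))) := Fintype.ofFinite _
  rw [card_addSubgroup_prod, finsum_eq_sum_of_fintype, Fintype.sum_prod_type]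
  rw [← Equiv.sum_comp (subgroupEquivFin p hp 4) (fun A : AddSubgroup (ZMod (p ^ 4)) =>
    ∑ K : AddSubgroup (ZMod (p ^ 2)), Nat.card (A →+ ZMod (p ^ 2) ⧸ K))]
  have key : ∀ (i : Fin 5) (j : Fin 3),
      Nat.card ((subgroupEquivFin p hp 4 i) →+ ZMod (p ^ 2) ⧸ (subgroupEquivFin p hp 2 j)) =
        p ^ (min (i : ℕ) (2 - (j : ℕ))) := by
    intro i j
    set A := subgroupEquivFin p hp 4 i with hAdef
    set K := subgroupEquivFin p hp 2 j with hKdef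
    haveI : IsAddCyclic (ZMod (p ^ 2) ⧸ K) :=
      isAddCyclic_of_surjective (QuotientAddGroup.mk' K) (QuotientAddGroup.mk'_surjective K)
    rw [card_addMonoidHom_cyclic]
    have hA : Nat.card A = p ^ (i : ℕ) := card_subgroupEquivFin p hp 4 i
    have hK : Nat.card K = p ^ (j : ℕ) := card_subgroupEquivFin p hp 2 j
    have hQ : Nat.card (ZMod (p ^ 2) ⧸ K) = p ^ (2 - (j : ℕ)) := by
      have h := AddSubgroup.card_eq_card_quotient_mul_card_addSubgroup K
      rw [Nat.card_zmod, hK] at h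
      have hj : (j : ℕ) ≤ 2 := Nat.lt_succ_iff.1 j.2
      have hsplit : p ^ 2 = p ^ (2 - (j : ℕ)) * p ^ (j : ℕ) := by
        rw [← pow_add]; congr 1; omega
      have h' : p ^ (2 - (j : ℕ)) * p ^ (j : ℕ) =
          Nat.card (ZMod (p ^ 2) ⧸ K) * p ^ (j : ℕ) := by rw [← hsplit]; exact h
      exact (Nat.eq_of_mul_eq_mul_right (pow_pos hp.pos _) h').symm
    rw [hA, hQ, gcd_pow_min]
  calc (∑ i : Fin 5, ∑ K : AddSubgroup (ZMod (p ^ 2)),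
          Nat.card ((subgroupEquivFin p hp 4 i) →+ ZMod (p ^ 2) ⧸ K))
      = ∑ i : Fin 5, ∑ j : Fin 3, p ^ (min (i : ℕ) (2 - (j : ℕ))) := by
        refine Finset.sum_congr rfl fun i _ => ?_
        rw [← Equiv.sum_comp (subgroupEquivFin p hp 2)
          (fun K : AddSubgroup (ZMod (p ^ 2)) =>
            Nat.card ((subgroupEquivFin p hp 4 i) →+ ZMod (p ^ 2) ⧸ K))]
        exact Finset.sum_congr rfl fun j _ => key i j
    _ = 3 * p ^ 2 + 5 * p + 7 := by
        simp [Fin.sum_univ_succ]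
        ring
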